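/- Let ι be a finite index type, and for each i ∈ ι let R_i and S_i be finite index types, A_i : Matrix R_i S_i ℝ, b_i : R_i → ℝ, and x_i : S_i → ℝ be such that A_i · x_i = b_i and x_i has minimal ℓ¹-norm among all solutions, i.e., for every x' with A_i · x' = b_i one has ∑_s |x_i(s)| ≤ ∑_s |x'(s)|. Define A : Matrix (Π i, R_i) (Π i, S_i) ℝ by A(r, s) = ∏_i A_i(r(i), s(i)), b(r) = ∏_i b_i(r(i)), and x(s) = ∏_i x_i(s(i)). Then A · x = b, and for every x' : (Π i, S_i) → ℝ with A · x' = b, one has ∑_s |x(s)| ≤ ∑_s |x'(s)|; moreover ∑_s |x(s)| = ∏_i ∑_s |x_i(s)|. -/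

import Mathlib

open Matrix

lemma exists_functional {R S : Type*} [Fintype R] [Fintype S] [DecidableEq S]
    (A : Matrix R S ℝ) (x : S → ℝ)
    (hopt : ∀ v : S → ℝ, A *ᵥ v = A *ᵥ x → ∑ s, |x s| ≤ ∑ s, |v s|) :
    ∃ c : S → ℝ, (∀ s, |c s| ≤ 1) ∧ (∀ v : S → ℝ, A *ᵥ v = 0 → ∑ s, v s * c s = 0) ∧
      ∑ s, x s * c s = ∑ s, |x s| := by
  classical
  set X := PiLp 1 (fun _ : S => ℝ) with hX
  let e : X ≃ₗ[ℝ] (S → ℝ) := WithLp.linearEquiv 1 ℝ (S → ℝ)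
  have norm_eq : ∀ v : X, ‖v‖ = ∑ s, |e v s| := by
    intro v
    rw [PiLp.norm_eq_sum (by norm_num : 0 < (1 : ENNReal).toReal)]
    simp [Real.norm_eq_abs]
    rfl
  let K : Submodule ℝ X := (LinearMap.ker A.mulVecLin).comap e.toLinearMap
  haveI : IsClosed (K : Set X) := Submodule.closed_of_finiteDimensional K
  have hmemK : ∀ v : X, v ∈ K ↔ A *ᵥ e v = 0 := by
    intro v; simp [K, LinearEquiv.coe_coe]
  -- the quotient norm of x equals its ℓ¹ norm
  have hqnorm : ‖(Submodule.Quotient.mk (e.symm x) : X ⧸ K)‖ = ∑ s, |x s| := by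
    apply le_antisymm
    · simpa using (Submodule.Quotient.norm_mk_le K (e.symm x)).trans_eq (by
        rw [norm_eq]; simp)
    · apply le_of_forall_pos_le_add
      intro ε hε
      obtain ⟨m, hm, hlt⟩ := Submodule.Quotient.norm_mk_lt
        (Submodule.Quotient.mk (e.symm x) : X ⧸ K) hε
      have : m - e.symm x ∈ K := (Submodule.Quotient.eq K).mp hm
      rw [hmemK] at this
      have hAm : A *ᵥ e m = A *ᵥ x := by
        have := congrArg (fun w => A *ᵥ w) (show (e m : S → ℝ) = (e m - x) + x by ring)
        simp only [Matrix.mulVec_add] at this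
        rw [this, show (e m : S → ℝ) - x = e (m - e.symm x) by simp, ‹A *ᵥ e (m - e.symm x) = 0›]
        simp
      calc ∑ s, |x s| ≤ ∑ s, |e m s| := hopt (e m) hAm
        _ = ‖m‖ := (norm_eq m).symm
        _ ≤ _ := hlt.le
  obtain ⟨g, hg1, hgx⟩ := exists_dual_vector'' ℝ (Submodule.Quotient.mk (e.symm x) : X ⧸ K)
  -- the functional
  let F : (S → ℝ) →ₗ[ℝ] ℝ :=
    (g.toLinearMap.comp K.mkQ).comp e.symm.toLinearMap
  have hF : ∀ v : S → ℝ, F v = g (Submodule.Quotient.mk (e.symm v)) := fun v => rfl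
  let c : S → ℝ := fun s => F (Pi.single s 1)
  have hFsum : ∀ v : S → ℝ, F v = ∑ s, v s * c s := by
    intro v
    conv_lhs => rw [← Finset.univ_sum_single v, map_sum]
    refine Finset.sum_congr rfl fun s _ => ?_
    have hsingle : Pi.single s (v s) = v s • (Pi.single s 1 : S → ℝ) := by
      rw [← Pi.single_smul, smul_eq_mul, mul_one]
    rw [hsingle, _root_.map_smul, smul_eq_mul]
  have hFnorm : ∀ v : S → ℝ, |F v| ≤ ∑ s, |v s| := by
    intro v
    rw [hF]
    calc |g (Submodule.Quotient.mk (e.symm v))| ≤ ‖g‖ * ‖(Submodule.Quotient.mk (e.symm v) : X ⧸ K)‖ := g.le_opNorm _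
      _ ≤ 1 * ‖(e.symm v : X)‖ := by
          exact mul_le_mul hg1 (Submodule.Quotient.norm_mk_le K (e.symm v)) (norm_nonneg _) zero_le_one
      _ = ∑ s, |v s| := by rw [one_mul, norm_eq]; simp
  refine ⟨c, ?_, ?_, ?_⟩
  · intro s
    have h2 := hFnorm (Pi.single s 1)
    have h1 : ∑ t, |Pi.single s (1:ℝ) t| = 1 := by
      simp [Pi.single_apply, apply_ite (abs : ℝ → ℝ)]
    rw [h1] at h2
    exact h2
  · intro v hv
    rw [← hFsum, hF]
    have : (e.symm v : X) ∈ K := by rw [hmemK]; simpa using hv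
    rw [(Submodule.Quotient.mk_eq_zero K).2 this, map_zero]
  · rw [← hFsum, hF, hgx, hqnorm]
    simp

lemma exists_preimage {R S : Type*} [Fintype R] [Fintype S] [DecidableEq R]
    (A : Matrix R S ℝ) (c : S → ℝ)
    (h : ∀ v : S → ℝ, A *ᵥ v = 0 → ∑ s, v s * c s = 0) :
    ∃ u : R → ℝ, Aᵀ *ᵥ u = c := by
  classical
  set E := EuclideanSpace ℝ S with hE
  let e : E ≃ₗ[ℝ] (S → ℝ) := WithLp.linearEquiv 2 ℝ (S → ℝ)
  have inner_eq : ∀ w v : E, (inner ℝ w v : ℝ) = ∑ s, e w s * e v s := by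
    intro w v
    rw [PiLp.inner_apply]; simp [e, mul_comm]
    rfl
  let W : Submodule ℝ E := (LinearMap.range Aᵀ.mulVecLin).comap e.toLinearMap
  have key : ∀ (u : R → ℝ) (v : E),
      (inner ℝ (e.symm (Aᵀ *ᵥ u)) v : ℝ) = u ⬝ᵥ (A *ᵥ e v) := by
    intro u v
    rw [inner_eq, Matrix.dotProduct_mulVec, ← Matrix.mulVec_transpose]
    simp [dotProduct]
  have hWperp : Wᗮ = (LinearMap.ker A.mulVecLin).comap e.toLinearMap := by
    ext v
    simp only [Submodule.mem_orthogonal, Submodule.mem_comap, LinearMap.mem_ker,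
      LinearMap.mem_range, Matrix.mulVecLin_apply, LinearEquiv.coe_coe]
    constructor
    · intro hv
      funext r
      have := hv (e.symm (Aᵀ *ᵥ Pi.single r 1)) ⟨Pi.single r 1, by simp⟩
      rw [key] at this
      simpa [single_dotProduct] using this
    · intro hv w hw
      obtain ⟨uu, huu⟩ := hw
      have hw' : w = e.symm (Aᵀ *ᵥ uu) := e.injective (by simp only [Matrix.mulVecLin_apply] at huu; simp [huu])
      rw [hw', key, hv, dotProduct_zero]
  have hc : e.symm c ∈ Wᗮᗮ := by
    rw [hWperp]
    intro w hw
    simp only [Submodule.mem_comap, LinearMap.mem_ker, Matrix.mulVecLin_apply] at hw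
    rw [inner_eq]
    simpa using h (e w) hw
  rw [Submodule.orthogonal_orthogonal] at hc
  obtain ⟨u, hu⟩ := hc
  exact ⟨u, by simpa [Matrix.mulVec_transpose] using hu⟩

section Helpers

lemma sum_prod_pi {ι : Type*} [Fintype ι] [DecidableEq ι] {S : ι → Type*}
    [∀ i, Fintype (S i)] (f : ∀ i, S i → ℝ) :
    ∑ s : ∀ i, S i, ∏ i, f i (s i) = ∏ i, ∑ t, f i t := by
  rw [Finset.prod_univ_sum, Fintype.piFinset_univ]

lemma exists_dual_cert {R S : Type*} [Fintype R] [Fintype S]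
    (A : Matrix R S ℝ) (b : R → ℝ) (x : S → ℝ) (hfeas : A *ᵥ x = b)
    (hopt : ∀ v : S → ℝ, A *ᵥ v = b → ∑ s, |x s| ≤ ∑ s, |v s|) :
    ∃ u : R → ℝ, (∀ s, |(Aᵀ *ᵥ u) s| ≤ 1) ∧ ∑ r, b r * u r = ∑ s, |x s| := by
  classical
  obtain ⟨c, hc1, hc2, hc3⟩ := exists_functional A x (by rw [hfeas]; exact hopt)
  obtain ⟨u, hu⟩ := exists_preimage A c hc2
  refine ⟨u, by rw [hu]; exact hc1, ?_⟩
  have : ∑ r, b r * u r = ∑ s, x s * c s := by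
    rw [← hfeas, ← hu]
    simp only [Matrix.mulVec, dotProduct, Matrix.transpose_apply,
      Finset.sum_mul, Finset.mul_sum]
    rw [Finset.sum_comm]
    apply Finset.sum_congr rfl; intro s _
    apply Finset.sum_congr rfl; intro r _
    ring
  rw [this, hc3]

end Helpers

theorem kronecker_l1_minimal {ι : Type*} [Fintype ι] [DecidableEq ι]
    {R S : ι → Type*} [∀ i, Fintype (R i)] [∀ i, Fintype (S i)]
    (A : ∀ i, Matrix (R i) (S i) ℝ) (b : ∀ i, R i → ℝ) (x : ∀ i, S i → ℝ)
    (hfeas : ∀ i, (A i) *ᵥ (x i) = b i)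
    (hopt : ∀ i, ∀ x' : S i → ℝ, (A i) *ᵥ x' = b i → ∑ s, |x i s| ≤ ∑ s, |x' s|) :
    let A' : Matrix (∀ i, R i) (∀ i, S i) ℝ := Matrix.of fun r s => ∏ i, A i (r i) (s i)
    let b' : (∀ i, R i) → ℝ := fun r => ∏ i, b i (r i)
    let x' : (∀ i, S i) → ℝ := fun s => ∏ i, x i (s i)
    A' *ᵥ x' = b' ∧
      (∀ y : (∀ i, S i) → ℝ, A' *ᵥ y = b' → ∑ s, |x' s| ≤ ∑ s, |y s|) ∧
      ∑ s, |x' s| = ∏ i, ∑ s, |x i s| := by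
  classical
  intro A' b' x'
  have hfeas' : A' *ᵥ x' = b' := by
    funext r
    simp only [A', b', x', Matrix.mulVec, dotProduct, Matrix.of_apply]
    simp only [← Finset.prod_mul_distrib]
    rw [sum_prod_pi fun i t => A i (r i) t * x i t]
    refine Finset.prod_congr rfl fun i _ => ?_
    rw [← hfeas i]
    rfl
  have hnorm : ∑ s, |x' s| = ∏ i, ∑ s, |x i s| := by
    simp only [x', Finset.abs_prod]
    exact sum_prod_pi fun i t => |x i t|
  refine ⟨hfeas', ?_, hnorm⟩
  intro y hy
  choose u hu1 hu2 using fun i => exists_dual_cert (A i) (b i) (x i) (hfeas i) (hopt i)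
  set c : ∀ i, S i → ℝ := fun i => (A i)ᵀ *ᵥ u i with hc
  have habs : ∀ s : ∀ i, S i, |∏ i, c i (s i)| ≤ 1 := by
    intro s
    rw [Finset.abs_prod]
    exact Finset.prod_le_one (fun i _ => abs_nonneg _) (fun i _ => hu1 i (s i))
  have key : ∑ s, y s * ∏ i, c i (s i) = ∏ i, ∑ s, |x i s| := by
    have expand : ∀ s : ∀ i, S i, ∏ i, c i (s i)
        = ∑ r : ∀ i, R i, ∏ i, (A i (r i) (s i) * u i (r i)) := by
      intro s
      rw [sum_prod_pi fun i t => A i t (s i) * u i t]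
      refine Finset.prod_congr rfl fun i _ => ?_
      simp [hc, Matrix.mulVec, dotProduct, Matrix.transpose_apply]
    calc ∑ s, y s * ∏ i, c i (s i)
        = ∑ s, ∑ r : ∀ i, R i, y s * ((∏ i, A i (r i) (s i)) * ∏ i, u i (r i)) := by
          refine Finset.sum_congr rfl fun s _ => ?_
          rw [expand s, Finset.mul_sum]
          refine Finset.sum_congr rfl fun r _ => ?_
          rw [Finset.prod_mul_distrib]
      _ = ∑ r : ∀ i, R i, (∑ s, y s * ∏ i, A i (r i) (s i)) * ∏ i, u i (r i) := by
          rw [Finset.sum_comm]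
          refine Finset.sum_congr rfl fun r _ => ?_
          rw [Finset.sum_mul]
          refine Finset.sum_congr rfl fun s _ => ?_
          ring
      _ = ∑ r : ∀ i, R i, b' r * ∏ i, u i (r i) := by
          refine Finset.sum_congr rfl fun r _ => ?_
          congr 1
          rw [← hy]
          simp only [Matrix.mulVec, dotProduct, A', Matrix.of_apply]
          exact Finset.sum_congr rfl fun s _ => mul_comm _ _
      _ = ∑ r : ∀ i, R i, ∏ i, (b i (r i) * u i (r i)) := by
          refine Finset.sum_congr rfl fun r _ => ?_
          rw [Finset.prod_mul_distrib]
      _ = ∏ i, ∑ t, b i t * u i t := sum_prod_pi fun i t => b i t * u i t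
      _ = ∏ i, ∑ s, |x i s| := Finset.prod_congr rfl fun i _ => hu2 i
  calc ∑ s, |x' s| = ∏ i, ∑ s, |x i s| := hnorm
    _ = ∑ s, y s * ∏ i, c i (s i) := key.symm
    _ ≤ ∑ s, |y s| := by
        refine Finset.sum_le_sum fun s _ => ?_
        calc y s * ∏ i, c i (s i) ≤ |y s * ∏ i, c i (s i)| := le_abs_self _
          _ = |y s| * |∏ i, c i (s i)| := abs_mul _ _
          _ ≤ |y s| * 1 := mul_le_mul_of_nonneg_left (habs s) (abs_nonneg _)
          _ = |y s| := mul_one _
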